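/- Let V be a finite-dimensional real inner product space, and let P₁ and P₂ be nonempty compact subsets of V contained in an affine hyperplane L with 0 ∉ L. Let χ be a linear functional on V vanishing identically on P₁ and strictly positive on P₂. Then there exists ε₀ with 0 < ε₀ ≤ 1 such that for all x ∈ P₁, y ∈ P₂ and all t ∈ [0, ε₀], the derivative at t of the function s ↦ χ((1−s)x + sy)/‖(1−s)x + sy‖ is strictly positive. -/
import Mathlib

open scoped RealInnerProductSpace


/-- Let `P₁, P₂` be nonempty compact subsets of a finite-dimensional
real inner product space, contained in an affine hyperplane `{x | g x = 1}` not
containing `0`, and let `χ` be a linear functional vanishing on `P₁` and strictly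
positive on `P₂`. Then there is `ε₀ ∈ (0,1]` such that for all `x ∈ P₁`, `y ∈ P₂` and
`t ∈ [0, ε₀]`, the derivative at `t` of `s ↦ χ((1−s)x + sy)/‖(1−s)x + sy‖` is strictly
positive. -/
theorem deriv_normalized_weight_pos_near_zero
    (V : Type*) [NormedAddCommGroup V] [InnerProductSpace ℝ V] [FiniteDimensional ℝ V]
    (P₁ P₂ : Set V) (hP₁ : P₁.Nonempty) (hP₂ : P₂.Nonempty)
    (hcP₁ : IsCompact P₁) (hcP₂ : IsCompact P₂)
    (g : V →ₗ[ℝ] ℝ) (hgP₁ : ∀ x ∈ P₁, g x = 1) (hgP₂ : ∀ y ∈ P₂, g y = 1)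
    (χ : V →ₗ[ℝ] ℝ) (hχP₁ : ∀ x ∈ P₁, χ x = 0) (hχP₂ : ∀ y ∈ P₂, 0 < χ y) :
    ∃ ε₀ : ℝ, 0 < ε₀ ∧ ε₀ ≤ 1 ∧
      ∀ x ∈ P₁, ∀ y ∈ P₂, ∀ t ∈ Set.Icc (0 : ℝ) ε₀,
        ∃ d : ℝ, 0 < d ∧
          HasDerivAt (fun s : ℝ => χ ((1 - s) • x + s • y) / ‖(1 - s) • x + s • y‖) d t := by
  obtain ⟨M, hM⟩ := (hcP₁.isBounded.union hcP₂.isBounded).subset_closedBall 0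
  obtain ⟨x₀, hx₀P, hx₀min⟩ := hcP₁.exists_isMinOn hP₁ continuous_norm.continuousOn
  have hm : 0 < ‖x₀‖ := by
    rcases eq_or_ne x₀ 0 with h | h
    · exfalso
      have h1 := hgP₁ x₀ hx₀P
      rw [h, map_zero] at h1
      norm_num at h1
    · exact norm_pos_iff.mpr h
  set m := ‖x₀‖ with hmdef
  have hdenpos : (0:ℝ) < 1 + 2 * M ^ 2 := by positivity
  refine ⟨min 1 (m ^ 2 / (1 + 2 * M ^ 2)), lt_min one_pos (by positivity), min_le_left _ _, ?_⟩
  intro x hx y hy t ht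
  have ht0 : 0 ≤ t := ht.1
  have htm : t * (1 + 2 * M ^ 2) ≤ m ^ 2 := by
    have := le_trans ht.2 (min_le_right _ _)
    exact (le_div_iff₀ hdenpos).mp this
  have hMx : ‖x‖ ≤ M := by
    simpa using Metric.mem_closedBall.mp (hM (Set.mem_union_left _ hx))
  have hMy : ‖y‖ ≤ M := by
    simpa using Metric.mem_closedBall.mp (hM (Set.mem_union_right _ hy))
  have hmx : m ≤ ‖x‖ := hx₀min hx
  have hM0 : 0 ≤ M := le_trans (norm_nonneg x) hMx
  -- key inner product quantities
  set a : ℝ := ⟪x, x⟫ with hadef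
  set b : ℝ := ⟪x, y - x⟫ with hbdef
  set e : ℝ := ⟪y - x, y - x⟫ with hedef
  have ha : a = ‖x‖ ^ 2 := real_inner_self_eq_norm_sq x
  have habs : |b| ≤ ‖x‖ * ‖y - x‖ := abs_real_inner_le_norm x (y - x)
  have hyx : ‖y - x‖ ≤ M + M := le_trans (norm_sub_le _ _) (add_le_add hMy hMx)
  have hb2 : -b ≤ 2 * M ^ 2 := by
    have h1 : ‖x‖ * ‖y - x‖ ≤ M * (M + M) :=
      mul_le_mul hMx hyx (norm_nonneg _) hM0
    nlinarith [neg_abs_le b]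
  have hkey : 0 < a + t * b := by
    rcases ht0.eq_or_lt with h | h
    · rw [← h]; nlinarith
    · nlinarith [mul_le_mul_of_nonneg_left hb2 h.le]
  -- the curve
  have hcne : ∀ s : ℝ, (1 - s) • x + s • y ≠ 0 := by
    intro s h
    have h1 : g ((1 - s) • x + s • y) = 1 := by
      simp [map_add, map_smul, hgP₁ x hx, hgP₂ y hy]
    rw [h, map_zero] at h1
    norm_num at h1
  have hc : HasDerivAt (fun s : ℝ => (1 - s) • x + s • y) (y - x) t := by
    have h1 : HasDerivAt (fun s : ℝ => (1 - s) • x) ((-1 : ℝ) • x) t :=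
      ((hasDerivAt_id t).const_sub 1).smul_const x
    have h2 : HasDerivAt (fun s : ℝ => s • y) ((1 : ℝ) • y) t :=
      (hasDerivAt_id t).smul_const y
    have := h1.add h2
    have heq : (-1 : ℝ) • x + (1 : ℝ) • y = y - x := by module
    rwa [heq] at this
  set ct : V := (1 - t) • x + t • y with hctdef
  have hctne : ct ≠ 0 := hcne t
  have hn : 0 < ‖ct‖ := norm_pos_iff.mpr hctne
  -- numerator derivative
  have hnum : HasDerivAt (fun s : ℝ => χ ((1 - s) • x + s • y)) (χ (y - x)) t := by
    exact (LinearMap.toContinuousLinearMap χ).hasFDerivAt.comp_hasDerivAt t hc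
  -- inner product squared norm derivative
  have hq : HasDerivAt (fun s : ℝ => ⟪(1 - s) • x + s • y, (1 - s) • x + s • y⟫)
      (⟪ct, y - x⟫ + ⟪y - x, ct⟫) t := hc.inner ℝ hc
  have hqt : ⟪ct, ct⟫ = ‖ct‖ ^ 2 := real_inner_self_eq_norm_sq ct
  have hqtpos : (0:ℝ) < ⟪ct, ct⟫ := by rw [hqt]; positivity
  have hsq : Real.sqrt ⟪ct, ct⟫ = ‖ct‖ := by
    rw [hqt, Real.sqrt_sq (norm_nonneg _)]
  have hsqrt : HasDerivAt (fun s : ℝ => Real.sqrt ⟪(1 - s) • x + s • y, (1 - s) • x + s • y⟫)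
      (1 / (2 * Real.sqrt ⟪ct, ct⟫) * (⟪ct, y - x⟫ + ⟪y - x, ct⟫)) t :=
    (Real.hasDerivAt_sqrt hqtpos.ne').comp t hq
  have hden : HasDerivAt (fun s : ℝ => ‖(1 - s) • x + s • y‖)
      (1 / (2 * Real.sqrt ⟪ct, ct⟫) * (⟪ct, y - x⟫ + ⟪y - x, ct⟫)) t := by
    have heq : (fun s : ℝ => Real.sqrt ⟪(1 - s) • x + s • y, (1 - s) • x + s • y⟫)
        = fun s : ℝ => ‖(1 - s) • x + s • y‖ := by
      funext s
      rw [real_inner_self_eq_norm_sq, Real.sqrt_sq (norm_nonneg _)]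
    rwa [heq] at hsqrt
  have hdiv := hnum.div hden (norm_ne_zero_iff.mpr hctne)
  refine ⟨_, ?_, hdiv⟩
  -- now positivity of the derivative value
  have hχct : χ ct = t * χ y := by
    simp [hctdef, map_add, map_smul, hχP₁ x hx]
  have hχyx : χ (y - x) = χ y := by
    simp [map_sub, hχP₁ x hx]
  have hinner : ⟪ct, y - x⟫ = b + t * e := by
    have : ct = x + t • (y - x) := by rw [hctdef]; module
    rw [this, inner_add_left, real_inner_smul_left, hbdef, hedef]
  have hinner' : ⟪y - x, ct⟫ = b + t * e := by
    rw [real_inner_comm]; exact hinner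
  have hn2 : ‖ct‖ ^ 2 = a + 2 * t * b + t ^ 2 * e := by
    rw [← hqt]
    have hct : ct = x + t • (y - x) := by rw [hctdef]; module
    rw [hct]
    simp only [inner_add_left, inner_add_right, real_inner_smul_left, real_inner_smul_right,
      ← hadef, ← hbdef, ← hedef, real_inner_comm (t • (y - x)) x, real_inner_smul_left, ← hbdef]
    have hcomm : ⟪y - x, x⟫ = b := by rw [real_inner_comm, ← hbdef]
    rw [hcomm]
    ring
  have hkey2 : 0 < ‖ct‖ ^ 2 - t * (b + t * e) := by
    rw [hn2]; nlinarith
  rw [hχct, hχyx, hsq, hinner, hinner']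
  have heq2 : (χ y * ‖ct‖ - t * χ y * (1 / (2 * ‖ct‖) * (b + t * e + (b + t * e)))) / ‖ct‖ ^ 2
      = χ y * (‖ct‖ ^ 2 - t * (b + t * e)) / ‖ct‖ ^ 3 := by
    field_simp
    ring
  rw [heq2]
  exact div_pos (mul_pos (hχP₂ y hy) hkey2) (by positivity)
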